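/- Let (X, d) be a geodesic metric space, γ a unit-speed geodesic ray and b its Busemann function. Then b is c-concave, i.e. b = (b^c)^c, where for ψ : X → ℝ ∪ {−∞} the c-transform is ψ^c(y) := inf_{x ∈ X} ( d(x,y)²/2 − ψ(x) ). -/

import Mathlib

/-- The `c`-transform with cost `c(x,y) = d(x,y)²/2`, for functions with values in
`ℝ ∪ {−∞}` (modelled by `EReal`). -/
noncomputable def cTransform {X : Type*} [MetricSpace X] (ψ : X → EReal) : X → EReal :=
  fun y => ⨅ x : X, (((dist x y) ^ 2 / 2 : ℝ) : EReal) - ψ x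

private lemma ereal_le_of_add {e : EReal} {r : ℝ}
    (h : ∀ ε : ℝ, 0 < ε → e ≤ ((r + ε : ℝ) : EReal)) : e ≤ (r : EReal) := by
  induction e using EReal.rec with
  | bot => exact bot_le
  | coe s =>
    refine EReal.coe_le_coe_iff.mpr ?_
    by_contra h'
    push_neg at h'
    have := EReal.coe_le_coe_iff.mp (h ((s - r) / 2) (by linarith))
    linarith
  | top =>
    exact ((EReal.coe_ne_top _) (top_le_iff.mp (h 1 one_pos))).elim

theorem statement5 {X : Type*} [MetricSpace X]
    (hgeo : ∀ x y : X, ∃ g : ℝ → X, g 0 = x ∧ g 1 = y ∧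
      ∀ s ∈ Set.Icc (0:ℝ) 1, ∀ t ∈ Set.Icc (0:ℝ) 1, dist (g s) (g t) = |s - t| * dist x y)
    (γ : ℝ → X)
    (hray : ∀ s t : ℝ, 0 ≤ s → 0 ≤ t → dist (γ s) (γ t) = |s - t|)
    (b : X → ℝ)
    (hb : ∀ x : X, Filter.Tendsto (fun t : ℝ => dist x (γ t) - t) Filter.atTop (nhds (b x))) :
    (fun x : X => (b x : EReal)) = cTransform (cTransform (fun x : X => (b x : EReal))) := by
  classical
  set ψ : X → EReal := fun x => (b x : EReal) with hψ
  have hmono : ∀ (x' : X) (t : ℝ), 0 ≤ t → b x' ≤ dist x' (γ t) - t := by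
    intro x' t ht
    refine le_of_tendsto (hb x') ?_
    filter_upwards [Filter.eventually_ge_atTop t] with s hs
    have h1 : dist x' (γ s) ≤ dist x' (γ t) + dist (γ t) (γ s) := dist_triangle _ _ _
    have h2 : dist (γ t) (γ s) = |t - s| := hray t s ht (ht.trans hs)
    rw [abs_sub_comm, abs_of_nonneg (by linarith)] at h2
    linarith
  funext x
  show ψ x = cTransform (cTransform ψ) x
  apply le_antisymm
  · refine le_iInf fun y => ?_
    rw [dist_comm y x]
    have h1 : cTransform ψ y ≤ (((dist x y) ^ 2 / 2 - b x : ℝ) : EReal) := by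
      have h := iInf_le (fun x' : X => (((dist x' y) ^ 2 / 2 : ℝ) : EReal) - ψ x') x
      rw [EReal.coe_sub]
      exact h.trans_eq rfl
    calc ψ x = (((dist x y) ^ 2 / 2 : ℝ) : EReal) - (((dist x y) ^ 2 / 2 - b x : ℝ) : EReal) := by
          rw [← EReal.coe_sub]
          norm_num [hψ]
      _ ≤ (((dist x y) ^ 2 / 2 : ℝ) : EReal) - cTransform ψ y := EReal.sub_le_sub le_rfl h1
  · refine ereal_le_of_add fun ε hε => ?_
    obtain ⟨t, ht0, htd, htlim⟩ :
        ∃ t : ℝ, 0 ≤ t ∧ dist x (γ 0) + 1 ≤ t ∧ dist x (γ t) - t ≤ b x + ε := by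
      have h1 := (hb x).eventually (eventually_le_nhds (lt_add_of_pos_right (b x) hε))
      have h2 := Filter.eventually_ge_atTop (max 0 (dist x (γ 0) + 1))
      obtain ⟨t, ht1, ht2⟩ := (h1.and h2).exists
      exact ⟨t, le_trans (le_max_left _ _) ht2, le_trans (le_max_right _ _) ht2, ht1⟩
    set z := γ t with hz
    have hD1 : 1 ≤ dist x z := by
      have h0t : dist (γ 0) z = t := by
        have := hray 0 t le_rfl ht0
        rw [this, abs_of_nonpos (by linarith), neg_sub, sub_zero]
      have htri := dist_triangle (γ 0) x z
      have : dist (γ 0) x = dist x (γ 0) := dist_comm _ _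
      linarith
    set D := dist x z with hD
    have hDpos : (0 : ℝ) < D := lt_of_lt_of_le one_pos hD1
    obtain ⟨g, hg0, hg1, hgd⟩ := hgeo x z
    set y := g (1 / D) with hy
    have hmem : (1 / D) ∈ Set.Icc (0 : ℝ) 1 :=
      ⟨by positivity, by rw [div_le_one hDpos]; exact hD1⟩
    have hxy : dist x y = 1 := by
      have h := hgd 0 ⟨le_rfl, zero_le_one⟩ (1 / D) hmem
      rw [hg0] at h
      rw [hy, h, zero_sub, abs_neg, abs_of_nonneg hmem.1]
      field_simp
      exact hD.symm
    have hyz : dist y z = D - 1 := by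
      have h := hgd (1 / D) hmem 1 ⟨zero_le_one, le_rfl⟩
      rw [hg1] at h
      rw [hy, h, abs_of_nonpos (by linarith [hmem.2]), neg_sub]
      field_simp
      rw [← hD]; ring
    have hlow : (((1 / 2 - b x - ε : ℝ)) : EReal) ≤ cTransform ψ y := by
      refine le_iInf fun x' => ?_
      show _ ≤ (((dist x' y) ^ 2 / 2 : ℝ) : EReal) - ((b x' : ℝ) : EReal)
      rw [← EReal.coe_sub]
      refine EReal.coe_le_coe_iff.mpr ?_
      have hb' := hmono x' t ht0
      have htri : dist x' z ≤ dist x' y + (D - 1) := by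
        have := dist_triangle x' y z
        linarith [hyz]
      rw [← hz] at hb'
      nlinarith [sq_nonneg (dist x' y - 1)]
    have hterm : cTransform (cTransform ψ) x
        ≤ (((dist y x) ^ 2 / 2 : ℝ) : EReal) - cTransform ψ y :=
      iInf_le (fun y' : X => (((dist y' x) ^ 2 / 2 : ℝ) : EReal) - cTransform ψ y') y
    rw [dist_comm y x, hxy] at hterm
    calc cTransform (cTransform ψ) x
        ≤ (((1 : ℝ) ^ 2 / 2 : ℝ) : EReal) - cTransform ψ y := hterm
      _ ≤ (((1 : ℝ) ^ 2 / 2 : ℝ) : EReal) - (((1 / 2 - b x - ε : ℝ)) : EReal) :=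
          EReal.sub_le_sub le_rfl hlow
      _ = ((b x + ε : ℝ) : EReal) := by
          rw [← EReal.coe_sub, EReal.coe_eq_coe_iff]; ring
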